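/- Let G be an n-vertex DAG, let ℓ be an integer with 1 ≤ ℓ ≤ n, and let 𝒞 be an ℓ-chain cover of G. Then there exists a set 𝒞* of at most 2ℓ pairwise vertex-disjoint chains of G, each containing at most ⌈n/ℓ⌉ vertices, such that the union of the vertex sets of the chains of 𝒞* equals the union of the vertex sets of the chains of 𝒞 (in particular, every directed path in G contains at most 2n/ℓ vertices lying on no chain of 𝒞*). -/

import Mathlib

open scoped Classical

/-- An edge of a directed graph on vertex set `Fin n`. -/
abbrev Edge (n : ℕ) := Fin n × Fin n

/-- `l` is a directed path in the graph with edge set `E`: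
a sequence of distinct vertices, each consecutive pair joined by an edge. -/
def IsPathList {n : ℕ} (E : Set (Edge n)) (l : List (Fin n)) : Prop :=
  l.Nodup ∧ l.Chain' (fun a b => (a, b) ∈ E)

/-- `l` is a directed path from `u` to `v` in the graph with edge set `E`. -/
def IsPathFromTo {n : ℕ} (E : Set (Edge n)) (u v : Fin n) (l : List (Fin n)) : Prop :=
  IsPathList E l ∧ l.head? = some u ∧ l.getLast? = some v

/-- `hdist E u v` is the minimum number of edges on a directed path from `u` to `v`
(`⊤` if no such path exists). -/
noncomputable def hdist {n : ℕ} (E : Set (Edge n)) (u v : Fin n) : ℕ∞ :=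
  sInf {k : ℕ∞ | ∃ l : List (Fin n), IsPathFromTo E u v l ∧ (l.length : ℕ∞) = k + 1}

/-- `(u, v)` is in the transitive closure: `u ≠ v` and `v` is reachable from `u`. -/
def TCrel {n : ℕ} (E : Set (Edge n)) (u v : Fin n) : Prop :=
  u ≠ v ∧ ∃ l : List (Fin n), IsPathFromTo E u v l

/-- The transitive closure of the graph with edge set `E`, as a set of pairs. -/
def TCset {n : ℕ} (E : Set (Edge n)) : Set (Edge n) := {p | TCrel E p.1 p.2}

/-- `H` is a shortcut set with hopbound `β` for the graph with edge set `E`. -/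
def IsShortcutSet {n : ℕ} (E H : Set (Edge n)) (β : ℕ) : Prop :=
  H ⊆ TCset E ∧ ∀ p ∈ TCset E, hdist (E ∪ H) p.1 p.2 ≤ (β : ℕ∞)

/-- Reachability in the graph with edge set `E`. -/
def Reaches {n : ℕ} (E : Set (Edge n)) (u v : Fin n) : Prop :=
  Relation.ReflTransGen (fun a b => (a, b) ∈ E) u v

/-- A DAG: a directed graph with no directed cycles. -/
def IsDAG {n : ℕ} (E : Set (Edge n)) : Prop :=
  ∀ u v : Fin n, (u, v) ∈ E → ¬ Reaches E v u

/-- A chain: a sequence of distinct vertices each consecutive pair of which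
lies in the transitive closure. -/
def IsChainIn {n : ℕ} (E : Set (Edge n)) (C : List (Fin n)) : Prop :=
  C.Nodup ∧ C.Chain' (fun a b => TCrel E a b)

/-- An `ℓ`-chain cover: a set of at most `ℓ` pairwise vertex-disjoint chains such that
every directed path contains at most `2n/ℓ` vertices lying on no chain. -/
def IsChainCover {n : ℕ} (E : Set (Edge n)) (ℓ : ℕ) (𝒞 : Set (List (Fin n))) : Prop :=
  𝒞.Finite ∧ 𝒞.ncard ≤ ℓ ∧ (∀ C ∈ 𝒞, IsChainIn E C) ∧
  (∀ C₁ ∈ 𝒞, ∀ C₂ ∈ 𝒞, C₁ ≠ C₂ → ∀ x : Fin n, x ∈ C₁ → x ∉ C₂) ∧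
  ∀ P : List (Fin n), IsPathList E P →
    ({x : Fin n | x ∈ P ∧ ∀ C ∈ 𝒞, x ∉ C}.ncard : ℝ) ≤ 2 * n / ℓ

/-- Split a list into chunks of size `m`, with fuel. -/
def chunksF {α : Type*} (m : ℕ) : ℕ → List α → List (List α)
  | 0, _ => []
  | _+1, [] => []
  | f+1, a :: t => (a :: t).take m :: chunksF m f ((a :: t).drop m)

/-- Split a list into chunks of size `m`. -/
def chunks {α : Type*} (m : ℕ) (l : List α) : List (List α) := chunksF m l.length l

lemma chunksF_nil {α : Type*} (m f : ℕ) : chunksF m f ([] : List α) = [] := by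
  cases f <;> simp [chunksF]

lemma chunksF_flatten {α : Type*} {m : ℕ} (hm : 1 ≤ m) :
    ∀ (f : ℕ) (l : List α), l.length ≤ f → (chunksF m f l).flatten = l := by
  intro f
  induction f with
  | zero =>
    intro l hl
    simp only [Nat.le_zero, List.length_eq_zero_iff] at hl
    simp [hl, chunksF_nil]
  | succ f ih =>
    intro l hl
    cases l with
    | nil => simp [chunksF]
    | cons a t =>
      simp only [chunksF, List.flatten_cons]
      rw [ih ((a :: t).drop m) (by simp at hl ⊢; omega), List.take_append_drop]

lemma chunksF_mem {α : Type*} {m : ℕ} (hm : 1 ≤ m) :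
    ∀ (f : ℕ) (l : List α) (c : List α), c ∈ chunksF m f l →
      c ≠ [] ∧ c.length ≤ m ∧ c <:+: l := by
  intro f
  induction f with
  | zero => intro l c hc; simp [chunksF] at hc
  | succ f ih =>
    intro l c hc
    cases l with
    | nil => simp [chunksF] at hc
    | cons a t =>
      simp only [chunksF, List.mem_cons] at hc
      rcases hc with rfl | hc
      · refine ⟨?_, List.length_take_le _ _, ((a :: t).take_prefix m).isInfix⟩
        simp only [ne_eq, List.take_eq_nil_iff]
        push_neg
        exact ⟨by omega, by simp⟩
      · obtain ⟨h1, h2, h3⟩ := ih _ c hc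
        exact ⟨h1, h2, h3.trans ((a :: t).drop_suffix m).isInfix⟩

lemma chunksF_length {α : Type*} {m : ℕ} (hm : 1 ≤ m) :
    ∀ (f : ℕ) (l : List α), l.length ≤ f → (chunksF m f l).length ≤ l.length / m + 1 := by
  intro f
  induction f with
  | zero => intro l hl; simp [chunksF]
  | succ f ih =>
    intro l hl
    cases l with
    | nil => simp [chunksF]
    | cons a t =>
      simp only [chunksF, List.length_cons]
      by_cases hlm : (a :: t).length ≤ m
      · rw [List.drop_eq_nil_of_le hlm, chunksF_nil]
        simp
      · push_neg at hlm
        have hd := ih ((a :: t).drop m) (by simp at hl ⊢; omega)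
        rw [show ((a :: t).drop m).length = (a :: t).length - m by simp] at hd
        have h2 : (a :: t).length / m = ((a :: t).length - m) / m + 1 :=
          Nat.div_eq_sub_div (by omega) hlm.le
        simp only [List.length_cons] at hd h2 ⊢
        omega

lemma chunks_flatten {α : Type*} {m : ℕ} (hm : 1 ≤ m) (l : List α) :
    (chunks m l).flatten = l := chunksF_flatten hm _ _ le_rfl

lemma chunks_mem {α : Type*} {m : ℕ} (hm : 1 ≤ m) {l c : List α} (hc : c ∈ chunks m l) :
    c ≠ [] ∧ c.length ≤ m ∧ c <:+: l := chunksF_mem hm _ _ _ hc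

lemma chunks_length {α : Type*} {m : ℕ} (hm : 1 ≤ m) (l : List α) :
    (chunks m l).length ≤ l.length / m + 1 := chunksF_length hm _ _ le_rfl

lemma mem_chunks_iff {α : Type*} {m : ℕ} (hm : 1 ≤ m) (l : List α) (x : α) :
    (∃ c ∈ chunks m l, x ∈ c) ↔ x ∈ l := by
  conv_rhs => rw [← chunks_flatten hm l]
  rw [List.mem_flatten]

lemma nat_div_add_div_le (a b m : ℕ) : a / m + b / m ≤ (a + b) / m := by
  rcases Nat.eq_zero_or_pos m with rfl | hm
  · simp
  · rw [Nat.le_div_iff_mul_le hm, Nat.add_mul]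
    exact Nat.add_le_add (Nat.div_mul_le_self a m) (Nat.div_mul_le_self b m)

lemma sum_div_le {ι : Type*} (F : Finset ι) (g : ι → ℕ) (m : ℕ) :
    ∑ i ∈ F, g i / m ≤ (∑ i ∈ F, g i) / m := by
  classical
  induction F using Finset.induction_on with
  | empty => simp
  | insert _ _ h ih =>
    rw [Finset.sum_insert h, Finset.sum_insert h]
    exact le_trans (Nat.add_le_add_left ih _) (nat_div_add_div_le _ _ _)

/-- Given an `ℓ`-chain cover `𝒞` of an `n`-vertex DAG `G` (`1 ≤ ℓ ≤ n`),
there is a set `𝒞*` of at most `2ℓ` pairwise vertex-disjoint chains, each with at most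
`⌈n/ℓ⌉` vertices, whose union of vertex sets equals that of `𝒞` (in particular, every
directed path contains at most `2n/ℓ` vertices lying on no chain of `𝒞*`). -/
theorem split_up_chains :
    ∀ (n : ℕ) (E : Set (Edge n)), IsDAG E →
      ∀ ℓ : ℕ, 1 ≤ ℓ → ℓ ≤ n →
        ∀ 𝒞 : Set (List (Fin n)), IsChainCover E ℓ 𝒞 →
          ∃ 𝒞' : Set (List (Fin n)),
            𝒞'.Finite ∧ 𝒞'.ncard ≤ 2 * ℓ ∧
            (∀ C ∈ 𝒞', IsChainIn E C) ∧
            (∀ C₁ ∈ 𝒞', ∀ C₂ ∈ 𝒞', C₁ ≠ C₂ → ∀ x : Fin n, x ∈ C₁ → x ∉ C₂) ∧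
            (∀ C ∈ 𝒞', C.length ≤ ⌈(n : ℝ) / (ℓ : ℝ)⌉₊) ∧
            ({x : Fin n | ∃ C ∈ 𝒞', x ∈ C} = {x : Fin n | ∃ C ∈ 𝒞, x ∈ C}) ∧
            (∀ P : List (Fin n), IsPathList E P →
              ({x : Fin n | x ∈ P ∧ ∀ C ∈ 𝒞', x ∉ C}.ncard : ℝ) ≤ 2 * n / ℓ) := by
  intro n E _hDAG ℓ hℓ1 hℓn 𝒞 h𝒞
  obtain ⟨hfin, hcard, hchain, hdisj, hpath⟩ := h𝒞
  set m : ℕ := ⌈(n : ℝ) / (ℓ : ℝ)⌉₊ with hmdef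
  have hℓpos : (0 : ℝ) < ℓ := by exact_mod_cast hℓ1
  have hm1 : 1 ≤ m := by
    rw [hmdef]
    apply Nat.one_le_ceil_iff.mpr
    apply div_pos _ hℓpos
    exact_mod_cast lt_of_lt_of_le (by exact_mod_cast hℓ1) hℓn
  have hnm : n ≤ m * ℓ := by
    have h1 : (n : ℝ) / ℓ ≤ m := Nat.le_ceil _
    have h2 : (n : ℝ) ≤ m * ℓ := (div_le_iff₀ hℓpos).mp h1
    exact_mod_cast h2
  set F : Finset (List (Fin n)) := hfin.toFinset with hFdef
  refine ⟨↑(F.biUnion (fun C => (chunks m C).toFinset)), Finset.finite_toSet _, ?_, ?_, ?_, ?_, ?_, ?_⟩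
  · -- cardinality
    rw [Set.ncard_coe_finset]
    calc (F.biUnion (fun C => (chunks m C).toFinset)).card
        ≤ ∑ C ∈ F, (chunks m C).toFinset.card := Finset.card_biUnion_le
      _ ≤ ∑ C ∈ F, (C.length / m + 1) := by
          apply Finset.sum_le_sum
          intro C _
          exact le_trans (List.toFinset_card_le _) (chunks_length hm1 C)
      _ = (∑ C ∈ F, C.length / m) + F.card := by rw [Finset.sum_add_distrib, Finset.sum_const,
          smul_eq_mul, mul_one]
      _ ≤ (∑ C ∈ F, C.length) / m + ℓ := by
          apply Nat.add_le_add (sum_div_le _ _ _)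
          rw [hFdef, ← Set.ncard_eq_toFinset_card 𝒞 hfin]
          exact hcard
      _ ≤ n / m + ℓ := by
          apply Nat.add_le_add_right
          apply Nat.div_le_div_right
          -- total length of disjoint nodup lists is at most n
          have hnodup : ∀ C ∈ F, C.Nodup := by
            intro C hC
            exact (hchain C (by rwa [hFdef, Set.Finite.mem_toFinset] at hC)).1
          have hpair : ∀ C₁ ∈ F, ∀ C₂ ∈ F, C₁ ≠ C₂ →
              Disjoint C₁.toFinset C₂.toFinset := by
            intro C₁ h₁ C₂ h₂ hne
            rw [hFdef, Set.Finite.mem_toFinset] at h₁ h₂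
            rw [Finset.disjoint_left]
            intro x hx₁ hx₂
            exact hdisj C₁ h₁ C₂ h₂ hne x (List.mem_toFinset.mp hx₁) (List.mem_toFinset.mp hx₂)
          calc ∑ C ∈ F, C.length
              = ∑ C ∈ F, C.toFinset.card := by
                apply Finset.sum_congr rfl
                intro C hC
                exact (List.toFinset_card_of_nodup (hnodup C hC)).symm
            _ = (F.biUnion List.toFinset).card := (Finset.card_biUnion hpair).symm
            _ ≤ (Finset.univ : Finset (Fin n)).card := Finset.card_le_card (Finset.subset_univ _)
            _ = n := Finset.card_fin n
      _ ≤ ℓ + ℓ := by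
          apply Nat.add_le_add_right
          calc n / m ≤ (m * ℓ) / m := Nat.div_le_div_right hnm
            _ = ℓ := Nat.mul_div_cancel_left ℓ (by omega)
      _ = 2 * ℓ := by ring
  · -- chains
    intro D hD
    simp only [Finset.coe_biUnion, Set.mem_iUnion, Finset.mem_coe, List.mem_toFinset] at hD
    obtain ⟨C, hC, hDC⟩ := hD
    rw [hFdef, Set.Finite.mem_toFinset] at hC
    obtain ⟨hCnd, hCch⟩ := hchain C hC
    obtain ⟨_, _, hinf⟩ := chunks_mem hm1 hDC
    exact ⟨hCnd.sublist hinf.sublist, hCch.infix hinf⟩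
  · -- pairwise disjoint
    intro D₁ hD₁ D₂ hD₂ hne x hx₁ hx₂
    simp only [Finset.coe_biUnion, Set.mem_iUnion, Finset.mem_coe, List.mem_toFinset] at hD₁ hD₂
    obtain ⟨C₁, hC₁, hDC₁⟩ := hD₁
    obtain ⟨C₂, hC₂, hDC₂⟩ := hD₂
    rw [hFdef, Set.Finite.mem_toFinset] at hC₁ hC₂
    by_cases hCC : C₁ = C₂
    · subst hCC
      have hfl : (chunks m C₁).flatten.Nodup := by
        rw [chunks_flatten hm1]
        exact (hchain C₁ hC₁).1
      have hpw := (List.nodup_flatten.mp hfl).2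
      have hdis : List.Disjoint D₁ D₂ :=
        @hpw.forall _ _ _ ⟨fun _ _ => List.Disjoint.symm⟩ _ hDC₁ _ hDC₂ hne
      exact hdis hx₁ hx₂
    · have hxC₁ : x ∈ C₁ := (chunks_mem hm1 hDC₁).2.2.sublist.subset hx₁
      have hxC₂ : x ∈ C₂ := (chunks_mem hm1 hDC₂).2.2.sublist.subset hx₂
      exact hdisj C₁ hC₁ C₂ hC₂ hCC x hxC₁ hxC₂
  · -- length bound
    intro D hD
    simp only [Finset.coe_biUnion, Set.mem_iUnion, Finset.mem_coe, List.mem_toFinset] at hD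
    obtain ⟨C, _, hDC⟩ := hD
    exact (chunks_mem hm1 hDC).2.1
  · -- same vertex set
    ext x
    simp only [Set.mem_setOf_eq]
    constructor
    · rintro ⟨D, hD, hx⟩
      simp only [Finset.coe_biUnion, Set.mem_iUnion, Finset.mem_coe, List.mem_toFinset] at hD
      obtain ⟨C, hC, hDC⟩ := hD
      rw [hFdef, Set.Finite.mem_toFinset] at hC
      exact ⟨C, hC, (chunks_mem hm1 hDC).2.2.sublist.subset hx⟩
    · rintro ⟨C, hC, hx⟩
      obtain ⟨D, hD, hxD⟩ := (mem_chunks_iff hm1 C x).mpr hx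
      refine ⟨D, ?_, hxD⟩
      simp only [Finset.coe_biUnion, Set.mem_iUnion, Finset.mem_coe, List.mem_toFinset]
      exact ⟨C, by rw [hFdef, Set.Finite.mem_toFinset]; exact hC, hD⟩
  · -- path cover property
    intro P hP
    have hsame : {x : Fin n | x ∈ P ∧ ∀ C ∈ (↑(F.biUnion (fun C => (chunks m C).toFinset)) :
        Set (List (Fin n))), x ∉ C} = {x : Fin n | x ∈ P ∧ ∀ C ∈ 𝒞, x ∉ C} := by
      ext x
      simp only [Set.mem_setOf_eq, and_congr_right_iff]
      intro _
      constructor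
      · intro h C hC hxC
        obtain ⟨D, hD, hxD⟩ := (mem_chunks_iff hm1 C x).mpr hxC
        refine h D ?_ hxD
        simp only [Finset.coe_biUnion, Set.mem_iUnion, Finset.mem_coe, List.mem_toFinset]
        exact ⟨C, by rw [hFdef, Set.Finite.mem_toFinset]; exact hC, hD⟩
      · intro h D hD hxD
        simp only [Finset.coe_biUnion, Set.mem_iUnion, Finset.mem_coe, List.mem_toFinset] at hD
        obtain ⟨C, hC, hDC⟩ := hD
        rw [hFdef, Set.Finite.mem_toFinset] at hC
        exact h C hC ((chunks_mem hm1 hDC).2.2.sublist.subset hxD)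
    rw [hsame]
    exact hpath P hP
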